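/- If φ is a Lie algebra automorphism of 𝔤 that commutes with τ² (so φ preserves 𝔨 and 𝔭) and whose restriction to 𝔭 commutes with the restriction of τ to 𝔭 (that is, φ(τ(p)) = τ(φ(p)) for all p ∈ 𝔭), then φ commutes with τ on all of 𝔤: φ(τ(x)) = τ(φ(x)) for every x ∈ 𝔤. -/

import Mathlib

/-- Let `𝔤` be a finite-dimensional real Lie algebra and `τ`
an automorphism with `τ⁴ = id`; set `𝔨 = ker (τ² - id)` and `𝔭 = ker (τ² + id)`
(membership expressed by `τ (τ ξ) = ξ` resp. `τ (τ p) = -p`), and assume `ad`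
restricted to `𝔭` is injective on `𝔨`.  If `φ` is a Lie algebra automorphism of
`𝔤` commuting with `τ²` and whose restriction to `𝔭` commutes with `τ|𝔭`, then
`φ` commutes with `τ` on all of `𝔤`. -/
theorem stmt4 {𝔤 : Type*} [LieRing 𝔤] [LieAlgebra ℝ 𝔤] [FiniteDimensional ℝ 𝔤]
    (τ : 𝔤 →ₗ⁅ℝ⁆ 𝔤) (hτ : ∀ x, τ (τ (τ (τ x))) = x)
    (hinj : ∀ ξ : 𝔤, τ (τ ξ) = ξ → (∀ p : 𝔤, τ (τ p) = -p → ⁅ξ, p⁆ = 0) → ξ = 0)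
    (φ : 𝔤 ≃ₗ⁅ℝ⁆ 𝔤)
    (hφτ2 : ∀ x : 𝔤, φ (τ (τ x)) = τ (τ (φ x)))
    (hφ𝔭 : ∀ p : 𝔤, τ (τ p) = -p → φ (τ p) = τ (φ p)) :
    ∀ x : 𝔤, φ (τ x) = τ (φ x) := by
  have hφadd : ∀ a b : 𝔤, φ (a + b) = φ a + φ b := fun a b => φ.toLieHom.map_add a b
  have hφsub : ∀ a b : 𝔤, φ (a - b) = φ a - φ b := fun a b => φ.toLieHom.map_sub a b
  have hφneg : ∀ a : 𝔤, φ (-a) = -φ a := fun a => φ.toLieHom.map_neg a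
  have hφinj : Function.Injective φ := φ.toLinearEquiv.injective
  -- commutation on 𝔨
  have hk : ∀ k : 𝔤, τ (τ k) = k → φ (τ k) = τ (φ k) := by
    intro k hkm
    have hξ : φ (τ k) - τ (φ k) = 0 := by
      apply hinj
      · -- the difference lies in 𝔨
        have h1 : τ (τ (φ (τ k))) = φ (τ k) := by
          rw [← hφτ2]
          exact congrArg φ (by rw [hkm])
        have h2 : τ (τ (τ (φ k))) = τ (φ k) := by
          have : τ (τ (φ k)) = φ k := by rw [← hφτ2, hkm]
          exact congrArg τ this
        rw [map_sub τ, map_sub τ, h1, h2]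
      · intro p hp
        set q : 𝔤 := φ.symm (τ (τ (τ p))) with hqdef
        have hφq : φ q = τ (τ (τ p)) := φ.apply_symm_apply _
        have hτφq : τ (φ q) = p := by rw [hφq, hτ]
        have hqmem : τ (τ q) = -q := by
          apply hφinj
          rw [hφτ2, hφq, hφneg, hφq, hτ (τ p), hp, map_neg τ, neg_neg]
        have hkq : τ (τ ⁅k, q⁆) = -⁅k, q⁆ := by
          rw [τ.map_lie, τ.map_lie, hkm, hqmem, lie_neg]
        have hmain := hφ𝔭 ⁅k, q⁆ hkq
        have hφτq : φ (τ q) = τ (φ q) := hφ𝔭 q hqmem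
        rw [τ.map_lie, φ.map_lie, hφτq, hτφq, φ.map_lie, τ.map_lie, hτφq] at hmain
        rw [sub_lie, hmain, sub_self]
    exact sub_eq_zero.mp hξ
  intro x
  have hkm : τ (τ (x + τ (τ x))) = x + τ (τ x) := by
    rw [map_add τ, map_add τ, hτ]; abel
  have hpm : τ (τ (x - τ (τ x))) = -(x - τ (τ x)) := by
    rw [map_sub τ, map_sub τ, hτ]; abel
  have h1 := hk _ hkm
  have h2 := hφ𝔭 _ hpm
  have h2x : φ (τ x) + φ (τ x) = τ (φ x) + τ (φ x) := by
    have l1 : φ (τ (x + τ (τ x))) + φ (τ (x - τ (τ x))) = φ (τ x) + φ (τ x) := by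
      rw [map_add τ, map_sub τ, hφadd, hφsub]; abel
    have l2 : τ (φ (x + τ (τ x))) + τ (φ (x - τ (τ x))) = τ (φ x) + τ (φ x) := by
      rw [hφadd, hφsub, map_add τ, map_sub τ]; abel
    rw [← l1, ← l2, h1, h2]
  have hsm : (2 : ℝ) • φ (τ x) = (2 : ℝ) • τ (φ x) := by
    rw [two_smul, two_smul]; exact h2x
  exact smul_right_injective 𝔤 (by norm_num : (2:ℝ) ≠ 0) hsm
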